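/- Let w ∈ ℂ with |w| ≥ R₀ := e√(2/(e² − 1)) ≈ 1.5208 (note R₀ > √2, so in particular w² ≠ 2). Then |Log(w²/(2 − w²))| ≥ 2, where Log denotes the principal branch of the complex logarithm. -/

import Mathlib

noncomputable section

/-- `R₀ = e √(2/(e² - 1))`. -/
def R₀ : ℝ := Real.exp 1 * Real.sqrt (2 / (Real.exp 1 ^ 2 - 1))

/-- `cos y ≥ -1/2` for `|y| ≤ 2`. -/
lemma aux_field (E : ℝ) (hE : 1 < E) : (1 - 1 / E) * (2 * E / (E - 1)) = 2 := by
  have h1 : E ≠ 0 := by linarith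
  have h2 : E - 1 ≠ 0 := by linarith
  field_simp

lemma cos_ge_neg_half {y : ℝ} (hy : y ^ 2 ≤ 4) : -(1 / 2 : ℝ) ≤ Real.cos y := by
  have h1 : Real.cos y = 2 * Real.cos (y / 2) ^ 2 - 1 := by
    have := Real.cos_two_mul (y / 2)
    rw [show 2 * (y / 2) = y by ring] at this
    linarith
  have hsq : (y / 2) ^ 2 ≤ 1 := by nlinarith
  have h2 : (1 : ℝ) / 2 ≤ Real.cos (y / 2) := by
    have := Real.one_sub_sq_div_two_le_cos (x := y / 2)
    linarith
  have h3 : (1 / 4 : ℝ) ≤ Real.cos (y / 2) ^ 2 := by nlinarith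
  linarith

set_option maxHeartbeats 1000000 in
theorem stmt_0 (w : ℂ) (hw : R₀ ≤ ‖w‖) :
    2 ≤ ‖Complex.log (w ^ 2 / (2 - w ^ 2))‖ := by
  have he1 : (1 : ℝ) < Real.exp 1 := by
    have := Real.exp_one_gt_d9; linarith
  have he2 : (1 : ℝ) < Real.exp 1 ^ 2 := by nlinarith
  have hden : (0:ℝ) < Real.exp 1 ^ 2 - 1 := by nlinarith
  have hR0sq : R₀ ^ 2 = 2 * Real.exp 1 ^ 2 / (Real.exp 1 ^ 2 - 1) := by
    rw [R₀, mul_pow, Real.sq_sqrt (div_nonneg (by norm_num) hden.le)]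
    field_simp
  set t : ℝ := ‖w‖ ^ 2 with ht
  have hR0pos : 0 < R₀ := by
    rw [R₀]
    exact mul_pos (Real.exp_pos 1) (Real.sqrt_pos.mpr (div_pos two_pos hden))
  have htR : R₀ ^ 2 ≤ t := by
    have : 0 ≤ ‖w‖ := norm_nonneg _
    nlinarith
  have ht2 : 2 < t := by
    rw [hR0sq] at htR
    have h1 : (2 : ℝ) < 2 * Real.exp 1 ^ 2 / (Real.exp 1 ^ 2 - 1) := by
      rw [lt_div_iff₀ (by linarith)]; nlinarith
    linarith
  have htpos : (0 : ℝ) < t := by linarith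
  -- the key bound 2/t ≤ 1 - 1/e²
  have hkey : 2 / t ≤ 1 - 1 / Real.exp 1 ^ 2 := by
    rw [hR0sq] at htR
    rw [div_le_iff₀ htpos]
    have h2 : (1 - 1 / Real.exp 1 ^ 2) * (2 * Real.exp 1 ^ 2 / (Real.exp 1 ^ 2 - 1)) = 2 :=
      aux_field _ he2
    nlinarith [mul_le_mul_of_nonneg_left htR (by
      have : (0:ℝ) < 1 - 1 / Real.exp 1 ^ 2 := by
        rw [sub_pos, div_lt_one (by positivity)]; exact he2
      linarith : (0:ℝ) ≤ 1 - 1 / Real.exp 1 ^ 2)]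
  -- nonvanishing
  have habsw2 : ‖w ^ 2‖ = t := by rw [norm_pow]
  have h2w : (2 : ℂ) - w ^ 2 ≠ 0 := by
    intro h
    have : w ^ 2 = 2 := by linear_combination -h
    rw [this] at habsw2
    simp at habsw2
    rw [← habsw2] at ht2
    norm_num at ht2
  have hw2 : w ^ 2 ≠ 0 := by
    intro h; rw [h] at habsw2; simp at habsw2; rw [← habsw2] at ht2; norm_num at ht2
  set z : ℂ := w ^ 2 / (2 - w ^ 2) with hz
  have hz0 : z ≠ 0 := div_ne_zero hw2 h2w
  have hinv : z⁻¹ + 1 = 2 / w ^ 2 := by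
    rw [hz, inv_div, div_add_one hw2]; ring
  have habsinv : ‖z⁻¹ + 1‖ = 2 / t := by
    rw [hinv, norm_div, habsw2]
    norm_num
  by_contra hcon
  push_neg at hcon
  set L : ℂ := Complex.log z with hL
  set x : ℝ := L.re with hx
  set y : ℝ := L.im with hy
  have hxy : x ^ 2 + y ^ 2 < 4 := by
    have h1 : ‖L‖ ^ 2 < 4 := by
      nlinarith [norm_nonneg L]
    rw [Complex.sq_norm, Complex.normSq_apply] at h1
    nlinarith
  have hexp : Complex.exp (-L) = z⁻¹ := by
    rw [Complex.exp_neg, hL, Complex.exp_log hz0]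
  -- compute |z⁻¹ + 1|² as a real expression
  set u : ℝ := Real.exp (-x) with hu
  have hnormsq : Complex.normSq (z⁻¹ + 1) = u ^ 2 + 2 * u * Real.cos y + 1 := by
    rw [← hexp, Complex.normSq_apply]
    simp only [Complex.add_re, Complex.add_im, Complex.exp_re, Complex.exp_im,
      Complex.neg_re, Complex.neg_im, Complex.one_re, Complex.one_im,
      Real.cos_neg, Real.sin_neg]
    rw [← hx, ← hy, ← hu]
    nlinarith [Real.sin_sq_add_cos_sq y]
  -- lower bound: normSq ≥ 3/4
  have hcos : -(1 / 2 : ℝ) ≤ Real.cos y := cos_ge_neg_half (by nlinarith)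
  have hupos : 0 < u := Real.exp_pos _
  have hlow : (3 / 4 : ℝ) ≤ Complex.normSq (z⁻¹ + 1) := by
    rw [hnormsq]
    nlinarith [sq_nonneg (u - 1 / 2), mul_le_mul_of_nonneg_left hcos (by linarith : (0:ℝ) ≤ 2 * u)]
  -- upper bound: normSq = (2/t)² ≤ (1 - 1/e²)² < 3/4
  have hup : Complex.normSq (z⁻¹ + 1) < 3 / 4 := by
    have h1 : Complex.normSq (z⁻¹ + 1) = (2 / t) ^ 2 := by
      rw [← habsinv, Complex.sq_norm]
    rw [h1]
    have h2 : (0 : ℝ) ≤ 2 / t := by positivity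
    have h3 : (2 / t) ^ 2 ≤ (1 - 1 / Real.exp 1 ^ 2) ^ 2 := by nlinarith
    have h4 : (1 - 1 / Real.exp 1 ^ 2 : ℝ) ^ 2 < 3 / 4 := by
      have hlt := Real.exp_one_lt_d9
      have hgt := Real.exp_one_gt_d9
      have hpos := Real.exp_pos 1
      have hb : (1 / Real.exp 1 ^ 2 : ℝ) > 1 / 2.7182818286 ^ 2 := by
        apply div_lt_div_of_pos_left <;> nlinarith
      have hsmall : (1 - 1 / Real.exp 1 ^ 2 : ℝ) < 0.8648 := by
        have : (1 / (2.7182818286: ℝ) ^ 2) > 0.1353 := by norm_num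
        linarith
      nlinarith [he2, div_pos (by norm_num : (0:ℝ)<1) (by nlinarith : (0:ℝ) < Real.exp 1 ^ 2)]
    linarith
  linarith

end
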